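/- arXiv:1802.09396 — 2 statements merged into one kernel-verified Lean document; each statement's English description precedes it below -/
import Mathlib

section
/- Let n ≥ 2 be an integer, μ ∈ (0,1), a ∈ [0,1), and 0 < t < s ≤ 1, and let F_t be the Borel probability measure on [0,1] with an atom of mass a at 1 and cumulative distribution function F_t(x) = (1-a)·((x-t)/(s-t))^{1/(n-1)} for x ∈ [t,s] (F_t(x) = 0 for x < t), and suppose F_t has mean μ. Then F_t is not a symmetric equilibrium of the frictionless game: there exists G ∈ M(μ) with u_n(G, F_t) > 1/n. Consequently, the lower endpoint of the continuous portion of a symmetric equilibrium distribution must be 0. -/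
open MeasureTheory

/-- The fair-tie winning probability of one draw from `G` against `n-1` i.i.d. draws from
`F`, with exact ties broken uniformly at random. -/
noncomputable def winProb (n : ℕ) (G F : Measure ℝ) : ℝ :=
  ∫ x, (∑ i ∈ Finset.range n,
      ((n - 1).choose i : ℝ) * ((F {x}).toReal) ^ i * ((F (Set.Ico 0 x)).toReal) ^ (n - 1 - i)
        / ((i : ℝ) + 1)) ∂G

/-- `F ∈ M(μ)`: a Borel probability measure on `[0,1]` with mean `μ`. -/
def MemM (μ : ℝ) (F : Measure ℝ) : Prop :=
  IsProbabilityMeasure F ∧ F (Set.Icc (0:ℝ) 1)ᶜ = 0 ∧ (∫ x, x ∂F) = μ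

open scoped ENNReal

noncomputable def twoPoint (p q : ℝ) (x y : ℝ) : Measure ℝ :=
  ENNReal.ofReal p • Measure.dirac x + ENNReal.ofReal q • Measure.dirac y

lemma twoPoint_isFinite (p q x y : ℝ) : IsFiniteMeasure (twoPoint p q x y) := by
  constructor
  rw [twoPoint]
  simp only [Measure.add_apply, Measure.smul_apply, smul_eq_mul, measure_univ, mul_one]
  exact ENNReal.add_lt_top.2 ⟨ENNReal.ofReal_lt_top, ENNReal.ofReal_lt_top⟩

lemma twoPoint_prob (p q x y : ℝ) (hp : 0 ≤ p) (hq : 0 ≤ q) (hpq : p + q = 1) :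
    IsProbabilityMeasure (twoPoint p q x y) := by
  constructor
  rw [twoPoint]
  simp only [Measure.add_apply, Measure.smul_apply, smul_eq_mul, measure_univ, mul_one]
  rw [← ENNReal.ofReal_add hp hq, hpq, ENNReal.ofReal_one]

lemma twoPoint_compl (p q x y : ℝ) : (twoPoint p q x y) ({x, y} : Set ℝ)ᶜ = 0 := by
  have hm : MeasurableSet (({x, y} : Set ℝ)ᶜ) := (Set.Finite.measurableSet (by simp)).compl
  rw [twoPoint]
  simp only [Measure.add_apply, Measure.smul_apply, smul_eq_mul,
    Measure.dirac_apply' _ hm]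
  simp [Set.indicator]

lemma twoPoint_integral (f : ℝ → ℝ) (p q x y : ℝ) (hp : 0 ≤ p) (hq : 0 ≤ q) :
    ∫ z, f z ∂(twoPoint p q x y) = p * f x + q * f y := by
  have hfin := twoPoint_isFinite p q x y
  set g : ℝ → ℝ := fun z => if z = x then f x else if z = y then f y else 0 with hg
  have hmg : Measurable g := by
    apply Measurable.ite (MeasurableSet.singleton x) measurable_const
    exact Measurable.ite (MeasurableSet.singleton y) measurable_const measurable_const
  have hgx : g x = f x := by simp [hg]
  have hgy : g y = f y := by by_cases h : y = x <;> simp [hg, h]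
  have hae : f =ᵐ[twoPoint p q x y] g := by
    have hsub : {z : ℝ | ¬ f z = g z} ⊆ ({x, y} : Set ℝ)ᶜ := by
      intro z hz hmem
      rcases hmem with rfl | rfl
      · exact hz hgx.symm
      · exact hz hgy.symm
    exact (measure_mono_null hsub (twoPoint_compl p q x y))
  rw [integral_congr_ae hae]
  rw [twoPoint, integral_add_measure, integral_smul_measure, integral_smul_measure,
    integral_dirac g x, integral_dirac g y, hgx, hgy]
  · simp [ENNReal.toReal_ofReal hp, ENNReal.toReal_ofReal hq]
  all_goals
    refine Integrable.smul_measure ⟨hmg.aestronglyMeasurable, ?_⟩ ENNReal.ofReal_ne_top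
    rw [HasFiniteIntegral, lintegral_dirac' _ hmg.enorm]
    exact ENNReal.coe_lt_top

lemma key_sum (m : ℕ) (a b : ℝ) :
    ((m:ℝ)+1) * a * (∑ i ∈ Finset.range (m+1),
      ((m).choose i : ℝ) * a^i * b^(m-i) / ((i:ℝ)+1)) = (a+b)^(m+1) - b^(m+1) := by
  rw [add_pow,
    Finset.sum_range_succ' (fun j => a ^ j * b ^ (m + 1 - j) * ((m+1).choose j : ℝ)) (m+1)]
  simp only [pow_zero, Nat.choose_zero_right, Nat.cast_one, mul_one, one_mul, Nat.sub_zero]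
  rw [show ∀ c : ℝ, c + b^(m+1) - b^(m+1) = c from fun c => by ring]
  rw [Finset.mul_sum]
  apply Finset.sum_congr rfl
  intro i hi
  have hch : ((m+1) : ℕ) * m.choose i = (m+1).choose (i+1) * (i+1) := by
    exact_mod_cast Nat.add_one_mul_choose_eq m i
  have hch' : ((m:ℝ)+1) * (m.choose i : ℝ) = ((m+1).choose (i+1) : ℝ) * ((i:ℝ)+1) := by
    exact_mod_cast congrArg (Nat.cast : ℕ → ℝ) hch
  have hne : ((i:ℝ)+1) ≠ 0 := by positivity
  have hsub : m + 1 - (i + 1) = m - i := by omega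
  rw [hsub]
  push_cast
  field_simp
  linear_combination (a ^ i * a * b ^ (m - i)) * hch'

lemma amgm_pow (m : ℕ) (b : ℝ) (hb0 : 0 ≤ b) (hb1 : b ≤ 1) :
    ((m:ℝ)+1) * b^m ≤ (m:ℝ) * b^(m+1) + 1 := by
  induction m with
  | zero => simp
  | succ k ih =>
    have hbk : b^(k+1) ≤ 1 := pow_le_one₀ hb0 hb1
    have key : ((k:ℝ)+1+1) * b^(k+1) - ((k:ℝ)+1) * b^(k+2) = b * (((k:ℝ)+1)*b^k - (k:ℝ)*b^(k+1)) + b^(k+1)*(1-b) := by ring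
    push_cast
    nlinarith [mul_le_mul_of_nonneg_left (sub_le_iff_le_add.mpr ih) hb0]

set_option maxHeartbeats 1000000

/-- For `n ≥ 2`, a distribution with an atom of mass `a` at `1` and continuous
portion with cdf `(1-a)((x-t)/(s-t))^{1/(n-1)}` on `[t,s]` with `t > 0` and mean `μ` is not
a symmetric equilibrium of the frictionless game: the lower endpoint of the continuous
portion of a symmetric equilibrium distribution must be `0`. -/
theorem stmt_16 (n : ℕ) (hn : 2 ≤ n) (μ a t s : ℝ)
    (hμ : 0 < μ) (hμ1 : μ < 1) (ha0 : 0 ≤ a) (ha1 : a < 1)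
    (ht : 0 < t) (hts : t < s) (hs1 : s ≤ 1)
    (F : Measure ℝ) [IsProbabilityMeasure F] (hsupp : F (Set.Icc (0:ℝ) 1)ᶜ = 0)
    (hatom : (F {1}).toReal = a)
    (hcdf0 : ∀ x : ℝ, 0 ≤ x → x < t → (F (Set.Iic x)).toReal = 0)
    (hcdf : ∀ x : ℝ, t ≤ x → x ≤ s →
      (F (Set.Iic x)).toReal = (1 - a) * ((x - t) / (s - t)) ^ ((1 : ℝ) / ((n : ℝ) - 1)))
    (hcdf2 : ∀ x : ℝ, s ≤ x → x < 1 → (F (Set.Iic x)).toReal = 1 - a)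
    (hmean : (∫ x, x ∂F) = μ) :
    ∃ G : Measure ℝ, MemM μ G ∧ 1 / (n : ℝ) < winProb n G F := by
  have hn1 : (1:ℝ) ≤ (n:ℝ) - 1 := by
    have : (2:ℝ) ≤ (n:ℝ) := by exact_mod_cast hn
    linarith
  have hnne : (n:ℝ) - 1 ≠ 0 := by linarith
  set b : ℝ := 1 - a with hbdef
  have hb : 0 < b := by simp [hbdef]; linarith
  have hb1 : b ≤ 1 := by simp [hbdef]; linarith
  have hst : 0 < s - t := by linarith
  have hs0 : 0 < s := lt_trans ht hts
  -- basic measure facts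
  have hfin : ∀ S : Set ℝ, F S ≠ ⊤ := fun S => measure_ne_top F S
  have hIcc : F (Set.Icc (0:ℝ) 1) = 1 := by
    rwa [prob_compl_eq_zero_iff measurableSet_Icc] at hsupp
  have hIic_one : ∀ y : ℝ, 1 ≤ y → F (Set.Iic y) = 1 := by
    intro y hy
    refine le_antisymm prob_le_one ?_
    calc (1:ℝ≥0∞) = F (Set.Icc 0 1) := hIcc.symm
    _ ≤ F (Set.Iic y) := measure_mono (fun z hz => le_trans hz.2 hy)
  have hIio0 : F (Set.Iio 0) = 0 :=
    measure_mono_null (fun z hz => by simp at hz ⊢; intro h; linarith) hsupp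
  have hIic0 : F (Set.Iic 0) = 0 := by
    have h0 := hcdf0 0 le_rfl ht
    rcases (ENNReal.toReal_eq_zero_iff _).mp h0 with h | h
    · exact h
    · exact absurd h (hfin _)
  have hsing0 : F ({0} : Set ℝ) = 0 :=
    measure_mono_null (by intro z hz; simp at hz; simp [hz]) hIic0
  have hIoi1 : F (Set.Ioi 1) = 0 :=
    measure_mono_null (fun z hz => by simp at hz ⊢; intro h; linarith) hsupp
  have hF1 : F ({1} : Set ℝ) = ENNReal.ofReal a := by
    rw [← hatom, ENNReal.ofReal_toReal (hfin _)]
  have hIci1 : F (Set.Ici 1) = ENNReal.ofReal a := by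
    have hset : Set.Ici (1:ℝ) = {1} ∪ Set.Ioi 1 := by
      ext z; simp [le_iff_eq_or_lt, eq_comm]
    rw [hset]
    refine le_antisymm ?_ (hF1 ▸ measure_mono Set.subset_union_left)
    calc F ({1} ∪ Set.Ioi 1) ≤ F {1} + F (Set.Ioi 1) := measure_union_le _ _
    _ = ENNReal.ofReal a := by rw [hF1, hIoi1, add_zero]
  have hale1 : ENNReal.ofReal a ≤ 1 := ENNReal.ofReal_le_one.mpr (le_of_lt ha1)
  have hIio1 : F (Set.Iio 1) = 1 - ENNReal.ofReal a := by
    rw [show Set.Iio (1:ℝ) = (Set.Ici 1)ᶜ by simp, measure_compl measurableSet_Ici (hfin _),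
      hIci1, measure_univ]
  have hIio1R : (F (Set.Iio 1)).toReal = b := by
    rw [hIio1, ENNReal.toReal_sub_of_le hale1 ENNReal.one_ne_top, ENNReal.toReal_one,
      ENNReal.toReal_ofReal ha0]
  have hIco01 : (F (Set.Ico 0 1)).toReal = b := by
    have hset : Set.Ico (0:ℝ) 1 = Set.Iio 1 \ Set.Iio 0 := by
      ext z; simp [Set.mem_Ico, Set.mem_diff, not_lt, and_comm]
    rw [hset, measure_diff_null hIio0, hIio1R]
  -- cdf at s
  have hcdfs : (F (Set.Iic s)).toReal = b := by
    rw [hcdf s (le_of_lt hts) le_rfl, div_self (ne_of_gt hst), Real.one_rpow, mul_one]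
  -- lower bound for F(Iio s)
  have hlow : ∀ δ : ℝ, 0 < δ → δ ≤ 1 → b * (1 - δ) ≤ (F (Set.Iio s)).toReal := by
    intro δ hδ0 hδ1
    set x : ℝ := t + (s - t) * (1 - δ)^(n-1) with hx
    have h1δ0 : 0 ≤ 1 - δ := by linarith
    have h1δ1 : 1 - δ < 1 := by linarith
    have hpow0 : 0 ≤ (1-δ)^(n-1) := pow_nonneg h1δ0 _
    have hpow1 : (1-δ)^(n-1) < 1 := pow_lt_one₀ h1δ0 h1δ1 (by omega)
    have htx : t ≤ x := by nlinarith
    have hxs : x < s := by nlinarith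
    have hx1 : (F (Set.Iic x)).toReal = b * (1 - δ) := by
      rw [hcdf x htx (le_of_lt hxs)]
      congr 1
      have hxt : (x - t)/(s-t) = (1-δ)^(n-1) := by
        field_simp [hx]
        rw [hx]; ring
      rw [hxt, ← Real.rpow_natCast (1-δ) (n-1), ← Real.rpow_mul h1δ0]
      rw [show ((n-1 : ℕ) : ℝ) = (n:ℝ) - 1 by
        rw [Nat.cast_sub (by omega)]; norm_num]
      rw [mul_one_div, div_self hnne, Real.rpow_one]
    calc b * (1-δ) = (F (Set.Iic x)).toReal := hx1.symm
    _ ≤ (F (Set.Iio s)).toReal := ENNReal.toReal_mono (hfin _)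
        (measure_mono (fun z hz => lt_of_le_of_lt hz hxs))
  have hIioSR : (F (Set.Iio s)).toReal = b := by
    refine le_antisymm (le_trans (ENNReal.toReal_mono (hfin _)
      (measure_mono Set.Iio_subset_Iic_self)) (le_of_eq hcdfs)) ?_
    by_contra hlt
    push_neg at hlt
    set v := (F (Set.Iio s)).toReal with hv
    have hv0 : 0 ≤ v := ENNReal.toReal_nonneg
    set δ : ℝ := (b - v)/(2*b) with hδ
    have hδ0 : 0 < δ := by
      apply div_pos (by linarith) (by linarith)
    have hδ1 : δ ≤ 1 := by
      rw [hδ, div_le_one (by linarith)]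
      linarith
    have := hlow δ hδ0 hδ1
    have hkey : v < b * (1 - δ) := by
      have heq : b * (1 - (b - v)/(2*b)) = (b + v)/2 := by
        field_simp
        ring
      rw [hδ, heq]
      linarith
    linarith
  have hIco0S : (F (Set.Ico 0 s)).toReal = b := by
    have hset : Set.Ico (0:ℝ) s = Set.Iio s \ Set.Iio 0 := by
      ext z; simp [Set.mem_Ico, Set.mem_diff, not_lt, and_comm]
    rw [hset, measure_diff_null hIio0, hIioSR]
  have hsingS : (F ({s} : Set ℝ)).toReal = 0 := by
    have hset : ({s} : Set ℝ) = Set.Iic s \ Set.Iio s := by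
      ext z; simp [le_antisymm_iff, not_lt, and_comm]
    have hdiff : F (Set.Iic s \ Set.Iio s) = F (Set.Iic s) - F (Set.Iio s) :=
      measure_diff Set.Iio_subset_Iic_self measurableSet_Iio.nullMeasurableSet (hfin _)
    rw [hset, hdiff,
      ENNReal.toReal_sub_of_le (measure_mono Set.Iio_subset_Iic_self) (hfin _),
      hcdfs, hIioSR, sub_self]
  have hIco00 : F (Set.Ico (0:ℝ) 0) = 0 := by simp
  -- mean computation via layer cake
  have haeIcc : ∀ᵐ x ∂F, x ∈ Set.Icc (0:ℝ) 1 := by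
    rw [ae_iff]
    exact hsupp
  have hid_int : Integrable (fun x : ℝ => x) F := by
    refine Integrable.mono' (integrable_const 1) measurable_id.aestronglyMeasurable ?_
    filter_upwards [haeIcc] with x hx
    rw [Real.norm_eq_abs, abs_le]
    exact ⟨by linarith [hx.1], hx.2⟩
  have hnn : 0 ≤ᵐ[F] fun x : ℝ => x := by
    filter_upwards [haeIcc] with x hx
    exact hx.1
  set cg : ℝ → ℝ := fun y => 1 - (F (Set.Iic y)).toReal with hcg
  have hIoiR : ∀ y : ℝ, (F (Set.Ioi y)).toReal = cg y := by
    intro y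
    rw [show Set.Ioi y = (Set.Iic y)ᶜ by simp, measure_compl measurableSet_Iic (hfin _),
      measure_univ, ENNReal.toReal_sub_of_le prob_le_one ENNReal.one_ne_top, ENNReal.toReal_one]
  have hcg_meas : Measurable cg := by
    have hmono : Monotone (fun y : ℝ => (F (Set.Iic y)).toReal) := by
      intro y z hyz
      exact ENNReal.toReal_mono (hfin _) (measure_mono (Set.Iic_subset_Iic.mpr hyz))
    exact measurable_const.sub hmono.measurable
  have hcg_bd : ∀ y : ℝ, 0 ≤ cg y ∧ cg y ≤ 1 := by
    intro y
    have h1 : (F (Set.Iic y)).toReal ≤ 1 := by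
      rw [← ENNReal.toReal_one]
      exact ENNReal.toReal_mono ENNReal.one_ne_top prob_le_one
    constructor
    · simp only [hcg, sub_nonneg]
      exact h1
    · have h0 : 0 ≤ (F (Set.Iic y)).toReal := ENNReal.toReal_nonneg
      simp only [hcg]
      linarith
  have hlc : μ = ∫ y in Set.Ioi (0:ℝ), cg y := by
    rw [← hmean, hid_int.integral_eq_integral_meas_lt hnn]
    apply integral_congr_ae
    filter_upwards with y
    rw [show {x : ℝ | y < x} = Set.Ioi y from rfl]; exact hIoiR y
  have hcg_intOn : ∀ S : Set ℝ, MeasurableSet S → volume S < ⊤ → IntegrableOn cg S volume := by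
    intro S hS hSfin
    refine Integrable.mono' (g := fun _ => (1:ℝ)) (integrableOn_const hSfin.ne) hcg_meas.aestronglyMeasurable ?_
    filter_upwards with y
    rw [Real.norm_eq_abs, abs_le]
    exact ⟨by linarith [(hcg_bd y).1], (hcg_bd y).2⟩
  have hcg_ii : ∀ u v : ℝ, IntervalIntegrable cg volume u v := by
    intro u v
    rw [intervalIntegrable_iff]
    exact hcg_intOn _ measurableSet_uIoc measure_Ioc_lt_top
  have hzeroOn : Set.EqOn cg 0 (Set.Ioi 1) := by
    intro y hy
    simp only [hcg, Pi.zero_apply]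
    rw [hIic_one y (le_of_lt hy), ENNReal.toReal_one, sub_self]
  have hIoi1zero : ∫ y in Set.Ioi (1:ℝ), cg y = 0 := by
    rw [setIntegral_congr_fun measurableSet_Ioi hzeroOn]
    simp
  have hsplit : ∫ y in Set.Ioi (0:ℝ), cg y = ∫ y in (0:ℝ)..1, cg y := by
    rw [← Set.Ioc_union_Ioi_eq_Ioi (zero_le_one), setIntegral_union
      (Set.Ioc_disjoint_Ioi le_rfl) measurableSet_Ioi
      (hcg_intOn _ measurableSet_Ioc measure_Ioc_lt_top)
      ((integrableOn_zero).congr_fun hzeroOn.symm measurableSet_Ioi),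
      hIoi1zero, add_zero, intervalIntegral.integral_of_le zero_le_one]
  have hadd1 : ∫ y in (0:ℝ)..1, cg y
      = (∫ y in (0:ℝ)..t, cg y) + (∫ y in t..s, cg y) + (∫ y in s..1, cg y) := by
    rw [intervalIntegral.integral_add_adjacent_intervals (hcg_ii 0 t) (hcg_ii t s),
      intervalIntegral.integral_add_adjacent_intervals (hcg_ii 0 s) (hcg_ii s 1)]
  have hcdft0 : ∀ y : ℝ, 0 ≤ y → y ≤ t → (F (Set.Iic y)).toReal = 0 := by
    intro y h0 h1
    rcases eq_or_lt_of_le h1 with rfl | h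
    · rw [hcdf y le_rfl (le_of_lt hts), sub_self, zero_div,
        Real.zero_rpow (one_div_ne_zero hnne), mul_zero]
    · exact hcdf0 y h0 h
  have hP1 : ∫ y in (0:ℝ)..t, cg y = t := by
    rw [intervalIntegral.integral_congr (g := fun _ => (1:ℝ)) ?_, intervalIntegral.integral_const,
      sub_zero, smul_eq_mul, mul_one]
    intro y hy
    rw [Set.uIcc_of_le (le_of_lt ht)] at hy
    simp only [hcg]
    rw [hcdft0 y hy.1 hy.2, sub_zero]
  have hP3 : ∫ y in s..1, cg y = a * (1 - s) := by
    rw [intervalIntegral.integral_congr_ae (g := fun _ => a) ?_, intervalIntegral.integral_const,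
      smul_eq_mul, mul_comm]
    have hne1 : ∀ᵐ (y : ℝ) ∂volume, y ≠ 1 := by
      refine compl_mem_ae_iff.mpr ?_
      exact measure_singleton 1
    filter_upwards [hne1] with y hy hmem
    rw [Set.uIoc_of_le hs1] at hmem
    simp only [hcg]
    rw [hcdf2 y (le_of_lt hmem.1) (lt_of_le_of_ne hmem.2 hy)]
    simp [hbdef]
  set e : ℝ := 1/((n:ℝ)-1) with hedef
  have hnpos : (0:ℝ) < (n:ℝ) - 1 := by linarith
  have he : 0 < e := by rw [hedef]; positivity
  have hP2 : ∫ y in t..s, cg y = (s - t) - b * ((s-t) / (e+1)) := by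
    have hcont : Continuous (fun y : ℝ => b * ((y - t)/(s-t)) ^ e) := by
      apply Continuous.mul continuous_const
      rw [continuous_iff_continuousAt]
      intro y
      exact ContinuousAt.rpow_const (by fun_prop) (Or.inr (le_of_lt he))
    have heq : Set.EqOn cg (fun y => 1 - b*((y-t)/(s-t))^e) (Set.uIcc t s) := by
      intro y hy
      rw [Set.uIcc_of_le (le_of_lt hts)] at hy
      simp only [hcg]
      rw [hcdf y hy.1 hy.2]
    rw [intervalIntegral.integral_congr heq,
      intervalIntegral.integral_sub intervalIntegrable_const (hcont.intervalIntegrable t s),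
      intervalIntegral.integral_const, smul_eq_mul, mul_one,
      intervalIntegral.integral_const_mul]
    have hJ : ∫ y in t..s, ((y-t)/(s-t))^e = (s-t)/(e+1) := by
      have h1 := intervalIntegral.integral_comp_sub_right (a := t) (b := s)
        (fun u => (u/(s-t))^e) t
      rw [sub_self] at h1
      rw [h1]
      have h2 : Set.EqOn (fun u : ℝ => (u/(s-t))^e) (fun u => u^e * ((s-t)^e)⁻¹)
          (Set.uIcc 0 (s-t)) := by
        intro u hu
        rw [Set.uIcc_of_le (le_of_lt hst)] at hu
        simp only
        rw [Real.div_rpow hu.1 (le_of_lt hst), div_eq_mul_inv]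
      rw [intervalIntegral.integral_congr h2, intervalIntegral.integral_mul_const,
        integral_rpow (Or.inl (by linarith : (-1:ℝ) < e)),
        Real.zero_rpow (by positivity), sub_zero, Real.rpow_add hst, Real.rpow_one]
      have hce : (s-t)^e ≠ 0 := ne_of_gt (Real.rpow_pos_of_pos hst e)
      field_simp
    rw [hJ]
  have hstar : μ = a + b*(t + (s-t)/(n:ℝ)) := by
    have hn0 : (n:ℝ) ≠ 0 := by linarith
    have hs_t : (s-t)/(e+1) = (s-t)*((n:ℝ)-1)/(n:ℝ) := by
      rw [hedef]
      field_simp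
      ring
    have hμeq : μ = t + ((s-t) - b*((s-t)/(e+1))) + a*(1-s) := by
      rw [hlc, hsplit, hadd1, hP1, hP2, hP3]
    rw [hμeq, hs_t, hbdef]
    field_simp
    ring
  -- key algebraic quantities
  set W : ℝ → ℝ := fun x => ∑ i ∈ Finset.range n,
      ((n - 1).choose i : ℝ) * ((F {x}).toReal) ^ i * ((F (Set.Ico 0 x)).toReal) ^ (n - 1 - i)
        / ((i : ℝ) + 1) with hWdef
  set U1 : ℝ := ∑ i ∈ Finset.range n,
      ((n - 1).choose i : ℝ) * a ^ i * b ^ (n - 1 - i) / ((i : ℝ) + 1) with hU1def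
  have hbn : b^(n-1) * b = b^n := by
    rw [← pow_succ]
    congr 1
    omega
  have keyid : (n:ℝ) * a * U1 = 1 - b^(n-1)*b := by
    have hks := key_sum (n-1) a b
    have hn1n : n - 1 + 1 = n := by omega
    rw [hn1n] at hks
    rw [hbn, hU1def]
    have hcast : ((n-1 : ℕ) : ℝ) + 1 = (n:ℝ) := by
      rw [Nat.cast_sub (by omega)]
      norm_num
    rw [← hcast]
    rw [hks, show a + b = 1 by rw [hbdef]; ring]
    rw [one_pow]
  have hterm_nonneg : ∀ i ∈ Finset.range n,
      0 ≤ ((n - 1).choose i : ℝ) * a ^ i * b ^ (n - 1 - i) / ((i : ℝ) + 1) := by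
    intro i _
    apply div_nonneg _ (by positivity)
    apply mul_nonneg (mul_nonneg (by positivity) (pow_nonneg ha0 i)) (by positivity)
  have hU1ge : b^(n-1) ≤ U1 := by
    have h0 := Finset.single_le_sum hterm_nonneg (Finset.mem_range.mpr (by omega : 0 < n))
    simpa using h0
  have hUspos : (0:ℝ) < b^(n-1) := pow_pos hb _
  have hU1pos : (0:ℝ) < U1 := lt_of_lt_of_le hUspos hU1ge
  -- values of W
  have hW1 : W 1 = U1 := by
    rw [hWdef, hU1def]
    simp only
    rw [hatom, hIco01]
  have hW0 : W 0 = 0 := by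
    rw [hWdef]
    simp only
    rw [hsing0, hIco00]
    apply Finset.sum_eq_zero
    intro i hi
    rcases Nat.eq_zero_or_pos i with rfl | hipos
    · simp [zero_pow (show n - 1 ≠ 0 by omega)]
    · simp [zero_pow (Nat.pos_iff_ne_zero.mp hipos)]
  have hWs : W s = b^(n-1) := by
    rw [hWdef]
    simp only
    rw [hsingS, hIco0S]
    rw [Finset.sum_eq_single_of_mem 0 (Finset.mem_range.mpr (by omega : 0 < n))]
    · simp
    · intro i _ hine
      simp [zero_pow hine]
  have hnR : (0:ℝ) < (n:ℝ) := by linarith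
  have hwin : ∀ p q x y : ℝ, 0 ≤ p → 0 ≤ q →
      winProb n (twoPoint p q x y) F = p * W x + q * W y := by
    intro p q x y hp hq
    rw [winProb, hWdef]
    exact twoPoint_integral _ p q x y hp hq
  clear_value W U1
  by_cases hA : b^(n-1) < s * U1
  · -- deviation to {0, 1}
    refine ⟨twoPoint (1-μ) μ 0 1, ⟨twoPoint_prob _ _ _ _ (by linarith) (le_of_lt hμ) (by ring),
      measure_mono_null ?_ (twoPoint_compl _ _ _ _), ?_⟩, ?_⟩
    · intro z hz
      simp only [Set.mem_compl_iff, Set.mem_insert_iff, Set.mem_singleton_iff] at hz ⊢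
      intro hcon
      rcases hcon with rfl | rfl
      · exact hz ⟨le_rfl, zero_le_one⟩
      · exact hz ⟨zero_le_one, le_rfl⟩
    · rw [twoPoint_integral (fun x => x) _ _ _ _ (by linarith) (le_of_lt hμ)]
      ring
    · rw [hwin _ _ _ _ (by linarith) (le_of_lt hμ), hW0, hW1]
      have hidA : (a + b*(t + (s-t)/(n:ℝ)))*U1 - 1/(n:ℝ)
          = (b*(s*U1 - b^(n-1)) + b*(((n:ℝ)-1)*(t*U1)))/(n:ℝ) := by
        field_simp
        linear_combination keyid
      have h1 : 0 < b*(s*U1 - b^(n-1)) := mul_pos hb (by linarith)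
      have h2 : 0 ≤ b*(((n:ℝ)-1)*(t*U1)) := by
        apply mul_nonneg (le_of_lt hb)
        apply mul_nonneg (by linarith) (le_of_lt (mul_pos ht hU1pos))
      have h3 : 0 < (b*(s*U1 - b^(n-1)) + b*(((n:ℝ)-1)*(t*U1)))/(n:ℝ) := by
        apply div_pos (by linarith) hnR
      rw [hstar]
      linarith [hidA, h3]
  · push_neg at hA
    by_cases hB : μ ≤ s
    · -- deviation to {0, s}
      have hq0 : 0 ≤ μ/s := le_of_lt (div_pos hμ hs0)
      have hp0 : 0 ≤ 1 - μ/s := by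
        rw [sub_nonneg, div_le_one hs0]
        exact hB
      refine ⟨twoPoint (1-μ/s) (μ/s) 0 s, ⟨twoPoint_prob _ _ _ _ hp0 hq0 (by ring),
        measure_mono_null ?_ (twoPoint_compl _ _ _ _), ?_⟩, ?_⟩
      · intro z hz
        simp only [Set.mem_compl_iff, Set.mem_insert_iff, Set.mem_singleton_iff] at hz ⊢
        intro hcon
        rcases hcon with rfl | rfl
        · exact hz ⟨le_rfl, zero_le_one⟩
        · exact hz ⟨le_of_lt hs0, hs1⟩
      · rw [twoPoint_integral (fun x => x) _ _ _ _ hp0 hq0]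
        rw [mul_zero, zero_add, div_mul_cancel₀ _ (ne_of_gt hs0)]
      · rw [hwin _ _ _ _ hp0 hq0, hW0, hWs]
        have hAs : (n:ℝ) * a * (s * U1) ≤ (n:ℝ) * a * b^(n-1) := by
          apply mul_le_mul_of_nonneg_left hA
          positivity
        have hidB1 : (a + b*(t + (s-t)/(n:ℝ)))/s * b^(n-1) - 1/(n:ℝ)
            = ((n:ℝ)*a*b^(n-1) - (n:ℝ)*a*(s*U1)
               + (s*((n:ℝ)*a*U1) - s*(1 - b^(n-1)*b))
               + ((n:ℝ)-1)*b*t*b^(n-1)) / ((n:ℝ)*s) := by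
          field_simp
          ring
        have hpos : 0 < ((n:ℝ)-1)*b*t*b^(n-1) := by
          apply mul_pos (mul_pos (mul_pos (by linarith) hb) ht) hUspos
        have hz : s*((n:ℝ)*a*U1) - s*(1 - b^(n-1)*b) = 0 := by
          rw [keyid]
          ring
        rw [hstar, mul_zero, zero_add]
        have hfrac : 0 < ((n:ℝ)*a*b^(n-1) - (n:ℝ)*a*(s*U1)
               + (s*((n:ℝ)*a*U1) - s*(1 - b^(n-1)*b))
               + ((n:ℝ)-1)*b*t*b^(n-1)) / ((n:ℝ)*s) := by
          apply div_pos _ (mul_pos hnR hs0)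
          rw [hz]
          linarith
        linarith [hidB1, hfrac]
    · push_neg at hB
      have hsl1 : s < 1 := lt_trans hB hμ1
      have hapos : 0 < a := by
        rcases lt_or_eq_of_le ha0 with h | h
        · exact h
        · exfalso
          have hb1' : b = 1 := by rw [hbdef, ← h]; ring
          have : μ = t + (s-t)/(n:ℝ) := by rw [hstar, ← h, hb1']; ring
          have hlt : (s-t)/(n:ℝ) < s - t := by
            apply div_lt_self hst
            have : (2:ℝ) ≤ (n:ℝ) := by exact_mod_cast hn
            linarith
          linarith
      have hU1strict : b^(n-1) < U1 := by
        have hsub : ({0, 1} : Finset ℕ) ⊆ Finset.range n := by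
          intro i hi
          rcases Finset.mem_insert.mp hi with rfl | hi1
          · exact Finset.mem_range.mpr (by omega)
          · rw [Finset.mem_singleton] at hi1
            subst hi1
            exact Finset.mem_range.mpr (by omega)
        have hsum2 := Finset.sum_le_sum_of_subset_of_nonneg hsub
          (fun i hi _ => hterm_nonneg i hi)
        rw [Finset.sum_pair (by norm_num : (0:ℕ) ≠ 1)] at hsum2
        have ht0 : ((n - 1).choose 0 : ℝ) * a ^ 0 * b ^ (n - 1 - 0) / ((0:ℕ) + 1 : ℝ)
            = b^(n-1) := by simp
        have ht1' : (0:ℝ) < ((n - 1).choose 1 : ℝ) * a ^ 1 * b ^ (n - 1 - 1) / ((1:ℝ) + 1) := by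
          apply div_pos _ (by norm_num)
          apply mul_pos (mul_pos _ (by simpa using hapos)) (pow_pos hb _)
          rw [Nat.choose_one_right]
          exact_mod_cast Nat.cast_pos.mpr (show 0 < n - 1 by omega)
        rw [← hU1def] at hsum2
        have ht0' : ((n - 1).choose 0 : ℝ) * a ^ 0 * b ^ (n - 1 - 0) / (((0:ℕ):ℝ) + 1)
            = b^(n-1) := by simp
        have ht1'' : (0:ℝ) < ((n - 1).choose 1 : ℝ) * a ^ 1 * b ^ (n - 1 - 1) / (((1:ℕ):ℝ) + 1) := by
          convert ht1' using 3
          norm_num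
        rw [ht0'] at hsum2
        linarith [ht1'']
      have hp0 : 0 ≤ (1-μ)/(1-s) := le_of_lt (div_pos (by linarith) (by linarith))
      have hq0 : 0 ≤ (μ-s)/(1-s) := le_of_lt (div_pos (by linarith) (by linarith))
      refine ⟨twoPoint ((1-μ)/(1-s)) ((μ-s)/(1-s)) s 1,
        ⟨twoPoint_prob _ _ _ _ hp0 hq0 (by
          rw [← add_div, div_eq_one_iff_eq (by linarith : (1:ℝ)-s ≠ 0)]
          ring),
        measure_mono_null ?_ (twoPoint_compl _ _ _ _), ?_⟩, ?_⟩
      · intro z hz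
        simp only [Set.mem_compl_iff, Set.mem_insert_iff, Set.mem_singleton_iff] at hz ⊢
        intro hcon
        rcases hcon with rfl | rfl
        · exact hz ⟨le_of_lt hs0, hs1⟩
        · exact hz ⟨zero_le_one, le_rfl⟩
      · rw [twoPoint_integral (fun x => x) _ _ _ _ hp0 hq0]
        have h1s : (1:ℝ) - s ≠ 0 := by linarith
        field_simp
        ring
      · rw [hwin _ _ _ _ hp0 hq0, hWs, hW1]
        have hcβ : (U1 - b^(n-1))/(1-s) < b^(n-1)/(s-t) := by
          have h1 : (U1 - b^(n-1))/(1-s) ≤ b^(n-1)/s := by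
            rw [div_le_div_iff₀ (by linarith) hs0]
            linarith [hA]
          have h2 : b^(n-1)/s < b^(n-1)/(s-t) := by
            apply div_lt_div_of_pos_left hUspos hst
            linarith
          linarith
        have hgap : 0 < (b^(n-1)/(s-t) - (U1 - b^(n-1))/(1-s)) * (b*(s-t)*(((n:ℝ)-1)/(n:ℝ))) := by
          apply mul_pos (by linarith)
          apply mul_pos (mul_pos hb hst)
          apply div_pos (by linarith) hnR
        have hidB2 : (1-(a + b*(t + (s-t)/(n:ℝ))))/(1-s) * b^(n-1)
              + ((a + b*(t + (s-t)/(n:ℝ)))-s)/(1-s) * U1 - 1/(n:ℝ)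
              - (b^(n-1)/(s-t) - (U1 - b^(n-1))/(1-s)) * (b*(s-t)*(((n:ℝ)-1)/(n:ℝ)))
            = ((n:ℝ)*a*U1 - (1 - b^(n-1)*b))/(n:ℝ) := by
          have h1s : (1:ℝ) - s ≠ 0 := by linarith
          have hstne : s - t ≠ 0 := ne_of_gt hst
          have hnne' : (n:ℝ) ≠ 0 := ne_of_gt hnR
          field_simp
          ring
        have hzero : ((n:ℝ)*a*U1 - (1 - b^(n-1)*b))/(n:ℝ) = 0 := by
          rw [keyid]
          simp
        rw [hstar]
        rw [hzero] at hidB2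
        linarith
end

section
/- Let n ≥ 2 be an integer and μ ∈ [1/n, 1), and let a ∈ [0,μ) satisfy a = μ(1-(1-a)^n) with s = nμ(1-a)^{n-1}. Let Φ : [0,1] → [0,1] be the cumulative distribution function of F*, i.e., Φ(x) = (1-a)(x/s)^{1/(n-1)} for x ∈ [0,s], Φ(x) = 1-a for x ∈ [s,1), and Φ(1) = 1. Then the expected maximum of n i.i.d. draws from F*, namely ∫_0^1 (1 - Φ(t)^n) dt, equals 1 - (1-a)^n + (n·s/(2n-1))·(s/(nμ))^{n/(n-1)}. -/
open MeasureTheory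

/-- For `n ≥ 2`, `μ ∈ [1/n,1)`, with `a ∈ [0,μ)` solving `a = μ(1-(1-a)^n)` and
`s = nμ(1-a)^{n-1}`, let `Φ` be the cdf of `F*`. Then the expected maximum of `n` i.i.d.
draws from `F*`, namely `∫_0^1 (1 - Φ(t)^n) dt`, equals
`1-(1-a)^n + (ns/(2n-1))·(s/(nμ))^{n/(n-1)}`. -/
theorem stmt_17 (n : ℕ) (hn : 2 ≤ n) (μ a s : ℝ)
    (hμn : 1 / (n : ℝ) ≤ μ) (hμ1 : μ < 1)
    (ha0 : 0 ≤ a) (haμ : a < μ) (haeq : a = μ * (1 - (1 - a) ^ n))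
    (hs : s = (n : ℝ) * μ * (1 - a) ^ (n - 1))
    (Φ : ℝ → ℝ)
    (hΦ1 : ∀ x : ℝ, 0 ≤ x → x ≤ s → Φ x = (1 - a) * (x / s) ^ ((1 : ℝ) / ((n : ℝ) - 1)))
    (hΦ2 : ∀ x : ℝ, s ≤ x → x < 1 → Φ x = 1 - a)
    (hΦ3 : Φ 1 = 1) :
    ∫ t in (0:ℝ)..1, (1 - (Φ t) ^ n) =
      1 - (1 - a) ^ n
        + ((n : ℝ) * s / (2 * (n : ℝ) - 1)) * (s / ((n : ℝ) * μ)) ^ ((n : ℝ) / ((n : ℝ) - 1)) := by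
  have hn2 : (2:ℝ) ≤ (n:ℝ) := by exact_mod_cast hn
  have hn1 : (1:ℝ) ≤ (n:ℝ) - 1 := by linarith
  have hn1ne : (n:ℝ) - 1 ≠ 0 := by linarith
  have h2n1 : (0:ℝ) < 2 * (n:ℝ) - 1 := by linarith
  have hnpos : (0:ℝ) < (n:ℝ) := by linarith
  have hμ0 : 0 < μ := lt_of_lt_of_le (by positivity) hμn
  have ha1 : a < 1 := lt_trans haμ hμ1
  have hb : 0 < 1 - a := by linarith
  set p : ℝ := (1:ℝ) / ((n:ℝ) - 1) with hp
  set q : ℝ := (n:ℝ) / ((n:ℝ) - 1) with hq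
  have hppos : 0 < p := by positivity
  have hqpos : 0 < q := by positivity
  have hpq : p * (n:ℝ) = q := by rw [hp, hq, div_mul_eq_mul_div, one_mul]
  have hcast : ((n - 1 : ℕ) : ℝ) = (n:ℝ) - 1 := by
    rw [Nat.cast_sub (by omega : 1 ≤ n), Nat.cast_one]
  have hs0 : 0 < s := by
    rw [hs]; positivity
  have hs1 : s ≤ 1 := by
    by_contra h
    push_neg at h
    have h1 := hΦ1 1 zero_le_one h.le
    rw [hΦ3] at h1
    have hlt : (1 / s) ^ p < 1 := by
      apply Real.rpow_lt_one (by positivity) _ hppos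
      rw [div_lt_one hs0]; exact h
    have : (1 - a) * (1 / s) ^ p < 1 := by
      calc (1 - a) * (1 / s) ^ p ≤ 1 * (1 / s) ^ p := by
            apply mul_le_mul_of_nonneg_right (by linarith) (by positivity)
        _ = (1 / s) ^ p := one_mul _
        _ < 1 := hlt
    linarith [h1 ▸ this]
  set c : ℝ := (1 - a) ^ n with hc
  -- the nice function
  set g : ℝ → ℝ := fun t => 1 - c * (min t s / s) ^ q with hg
  have hgcont : Continuous g := by
    have h1 : Continuous fun x : ℝ => x ^ q :=
      continuous_iff_continuousAt.mpr fun x => Real.continuousAt_rpow_const x q (Or.inr hqpos.le)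
    exact continuous_const.sub (continuous_const.mul
      (h1.comp ((continuous_id.min continuous_const).div_const s)))
  -- a.e. equality on (0,1]
  have hcongr : ∫ t in (0:ℝ)..1, (1 - (Φ t) ^ n) = ∫ t in (0:ℝ)..1, g t := by
    apply intervalIntegral.integral_congr_ae
    have h1 : ∀ᵐ t : ℝ ∂volume, t ≠ 1 := by
      rw [ae_iff]
      have hset : {x : ℝ | ¬ x ≠ 1} = {1} := by ext t; simp
      rw [hset]
      exact measure_singleton 1
    filter_upwards [h1] with t ht htmem
    rw [Set.uIoc_of_le zero_le_one] at htmem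
    by_cases hts : t ≤ s
    · have ht0 : 0 ≤ t := le_of_lt htmem.1
      rw [hΦ1 t ht0 hts, hg]
      simp only [min_eq_left hts]
      rw [mul_pow, ← Real.rpow_natCast ((t/s) ^ p) n, ← Real.rpow_mul (by positivity), hpq]
    · push_neg at hts
      have htlt : t < 1 := lt_of_le_of_ne htmem.2 ht
      rw [hΦ2 t hts.le htlt, hg]
      simp only [min_eq_right hts.le]
      rw [div_self hs0.ne', Real.one_rpow, mul_one]
  rw [hcongr]
  -- split the integral
  have hint1 : IntervalIntegrable g volume 0 s := hgcont.intervalIntegrable _ _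
  have hint2 : IntervalIntegrable g volume s 1 := hgcont.intervalIntegrable _ _
  rw [← intervalIntegral.integral_add_adjacent_intervals hint1 hint2]
  -- compute the first piece
  have hI1 : ∫ t in (0:ℝ)..s, g t = s - c * (s * ((n:ℝ) - 1) / (2 * (n:ℝ) - 1)) := by
    have heq : ∫ t in (0:ℝ)..s, g t = ∫ t in (0:ℝ)..s, (1 - c * (t ^ q / s ^ q)) := by
      apply intervalIntegral.integral_congr
      intro t htmem
      rw [Set.uIcc_of_le hs0.le] at htmem
      simp only [hg]
      rw [min_eq_left htmem.2, Real.div_rpow htmem.1 hs0.le]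
    rw [heq]
    rw [intervalIntegral.integral_sub (intervalIntegrable_const)
      (by
        apply IntervalIntegrable.const_mul
        apply IntervalIntegrable.div_const
        apply intervalIntegral.intervalIntegrable_rpow'
        linarith)]
    rw [intervalIntegral.integral_const, intervalIntegral.integral_const_mul,
      intervalIntegral.integral_div]
    rw [integral_rpow (Or.inl (by linarith : (-1:ℝ) < q))]
    have hzq : (0:ℝ) ^ (q + 1) = 0 := Real.zero_rpow (by positivity)
    rw [hzq]
    have hsq : s ^ (q + 1) = s ^ q * s := by
      rw [Real.rpow_add hs0, Real.rpow_one]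
    rw [hsq]
    have hsqne : s ^ q ≠ 0 := by positivity
    have hq1 : q + 1 = (2 * (n:ℝ) - 1) / ((n:ℝ) - 1) := by
      rw [hq]; field_simp; ring
    rw [hq1]
    field_simp
    ring
  -- compute the second piece
  have hI2 : ∫ t in s..(1:ℝ), g t = (1 - s) * (1 - c) := by
    have heq : ∫ t in s..(1:ℝ), g t = ∫ t in s..(1:ℝ), (1 - c) := by
      apply intervalIntegral.integral_congr
      intro t htmem
      rw [Set.uIcc_of_le hs1] at htmem
      simp only [hg]
      rw [min_eq_right htmem.1, div_self hs0.ne', Real.one_rpow, mul_one]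
    rw [heq, intervalIntegral.integral_const, smul_eq_mul]
  rw [hI1, hI2]
  -- identify (s/(nμ))^(n/(n-1)) with (1-a)^n
  have hsnμ : s / ((n:ℝ) * μ) = (1 - a) ^ (n - 1) := by
    rw [hs]; field_simp
  have hrpow : (s / ((n:ℝ) * μ)) ^ q = c := by
    rw [hsnμ, ← Real.rpow_natCast (1 - a) (n - 1), ← Real.rpow_mul hb.le, hcast]
    have : ((n:ℝ) - 1) * q = (n:ℝ) := by rw [hq]; field_simp
    rw [this, Real.rpow_natCast]
  rw [hrpow]
  field_simp
  linear_combination (-(s * c)) * mul_inv_cancel₀ h2n1.ne'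
end
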